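/- The measure μ on (0,1)³ × {0,1} with density (6/π²) · 𝟙{0<A<1} · 𝟙{0<B<1−A} · 𝟙{0<Q<1/(2−A−B)} · 1/(1−A) with respect to dA dB dQ times counting measure on N ∈ {0,1} is a probability measure, i.e. 2 · (6/π²) · ∫₀¹ ∫₀^{1−A} ∫₀^{1/(2−A−B)} dQ dB dA / (1−A) = 1. -/

import Mathlib

open Real MeasureTheory intervalIntegral

private lemma eta_two : HasSum (fun n : ℕ => (-1:ℝ)^n / (n+1)^2) (π^2/12) := by
  have h1 : HasSum (fun n : ℕ => (1:ℝ) / (n+1)^2) (π^2/6) := by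
    have := hasSum_zeta_two
    rw [← hasSum_nat_add_iff' 1] at this
    simpa using this
  set h : ℕ → ℝ := fun n : ℕ => if Odd n then (2:ℝ)/(n+1)^2 else 0 with hdef
  have hodd : HasSum (fun k : ℕ => h (2*k+1)) (π^2/12) := by
    have key : (fun k : ℕ => h (2*k+1)) = fun k : ℕ => (1/2) * ((1:ℝ)/(k+1)^2) := by
      funext k
      simp only [hdef, Nat.odd_iff]
      rw [if_pos (by omega : (2*k+1) % 2 = 1)]
      push_cast
      field_simp
      ring
    rw [key]
    have := h1.mul_left (1/2)
    rwa [show (1:ℝ)/2*(π^2/6) = π^2/12 by ring] at this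
  have heven : HasSum (fun k : ℕ => h (2*k)) 0 := by
    have key : (fun k : ℕ => h (2*k)) = fun _ => (0:ℝ) := by
      funext k
      simp [hdef, Nat.odd_iff, Nat.mul_mod_right]
    rw [key]; exact hasSum_zero
  have hh : HasSum h (π^2/12) := by
    simpa using heven.even_add_odd hodd
  have hsub := h1.sub hh
  have key : (fun n : ℕ => (-1:ℝ)^n / (n+1)^2) = fun n : ℕ => (1:ℝ)/(n+1)^2 - h n := by
    funext n
    rcases Nat.even_or_odd n with he | ho
    · rw [he.neg_one_pow]
      rw [hdef]
      simp [if_neg (Nat.not_odd_iff_even.mpr he)]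
    · rw [ho.neg_one_pow]
      simp only [hdef, if_pos ho]
      ring
  rw [key]
  rwa [show π^2/6 - π^2/12 = (π^2/12:ℝ) by ring] at hsub

private lemma dilog_int : (∫ u in (0:ℝ)..1, Real.log (1+u) / u) = π^2/12 := by
  have heta := eta_two
  rw [intervalIntegral.integral_of_le zero_le_one, MeasureTheory.integral_Ioc_eq_integral_Ioo]
  set F : ℕ → ℝ → ℝ := fun n u => (-1:ℝ)^n / (n+1) * u^n with hF
  have hpow : ∀ n : ℕ, IntegrableOn (fun u : ℝ => u^n) (Set.Ioo 0 1) := fun n =>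
    ((intervalIntegrable_iff_integrableOn_Ioc_of_le zero_le_one).mp
      (intervalIntegral.intervalIntegrable_pow n)).mono_set Set.Ioo_subset_Ioc_self
  have hFint : ∀ n : ℕ, Integrable (F n) (volume.restrict (Set.Ioo 0 1)) := fun n =>
    (hpow n).const_mul _
  have hIpow : ∀ n : ℕ, (∫ u in Set.Ioo (0:ℝ) 1, u^n) = 1/(n+1) := by
    intro n
    rw [← MeasureTheory.integral_Ioc_eq_integral_Ioo,
      ← intervalIntegral.integral_of_le zero_le_one, integral_pow]
    simp
  have hnorm : ∀ n : ℕ, (∫ u in Set.Ioo (0:ℝ) 1, ‖F n u‖) = 1/(n+1)^2 := by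
    intro n
    have : ∀ u ∈ Set.Ioo (0:ℝ) 1, ‖F n u‖ = 1/(n+1) * u^n := by
      intro u hu
      rw [hF]
      simp only [norm_mul, norm_div, norm_pow, norm_neg, norm_one, one_pow,
        Real.norm_eq_abs]
      rw [abs_of_nonneg (by positivity : (0:ℝ) ≤ (n:ℝ)+1),
        abs_of_nonneg (le_of_lt hu.1)]
    rw [MeasureTheory.setIntegral_congr_fun measurableSet_Ioo this,
      MeasureTheory.integral_const_mul, hIpow]
    field_simp
  have hsummable : Summable fun n : ℕ => ∫ u in Set.Ioo (0:ℝ) 1, ‖F n u‖ := by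
    simp only [hnorm]
    have : Summable fun n : ℕ => (1:ℝ)/(n+1)^2 := by
      have := (Real.summable_one_div_nat_pow (p := 2)).mpr one_lt_two
      exact_mod_cast (summable_nat_add_iff 1).mpr this
    exact this
  have hswap := MeasureTheory.integral_tsum_of_summable_integral_norm hFint hsummable
  have hptwise : ∀ u ∈ Set.Ioo (0:ℝ) 1, Real.log (1+u) / u = ∑' n, F n u := by
    intro u hu
    have habs : |(-u)| < 1 := by rw [abs_neg, abs_of_pos hu.1]; exact hu.2
    have hs := Real.hasSum_pow_div_log_of_abs_lt_one habs
    have := hs.mul_left (-1/u)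
    have heq : (fun n : ℕ => -1/u * ((-u)^(n+1)/(n+1))) = fun n : ℕ => F n u := by
      funext n
      rw [hF]
      have : (-u)^(n+1) = (-1:ℝ)^(n+1) * u^(n+1) := by
        rw [neg_pow]
      rw [this]
      have hu0 : u ≠ 0 := ne_of_gt hu.1
      have hn0 : (n:ℝ) + 1 ≠ 0 := by positivity
      field_simp
      ring
    rw [heq] at this
    have hval : -1/u * -Real.log (1 - -u) = Real.log (1+u) / u := by
      rw [sub_neg_eq_add]
      field_simp
    rw [hval] at this
    exact this.tsum_eq.symm
  rw [MeasureTheory.setIntegral_congr_fun measurableSet_Ioo hptwise, ← hswap]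
  have : ∀ n : ℕ, (∫ u in Set.Ioo (0:ℝ) 1, F n u) = (-1:ℝ)^n/(n+1)^2 := by
    intro n
    rw [hF]
    simp only []
    rw [MeasureTheory.integral_const_mul, hIpow]
    field_simp
  rw [tsum_congr this]
  exact heta.tsum_eq

private lemma b_int (A : ℝ) (hA : A ∈ Set.Ioo (0:ℝ) 1) :
    (∫ B in (0:ℝ)..(1 - A), 1 / (2 - A - B)) = Real.log (2 - A) := by
  have h : ∀ B ∈ Set.uIcc (0:ℝ) (1 - A),
      HasDerivAt (fun b => -Real.log (2 - A - b)) (1 / (2 - A - B)) B := by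
    intro B hB
    rw [Set.uIcc_of_le (by linarith [hA.2])] at hB
    have hpos : 0 < 2 - A - B := by
      rcases hB with ⟨h1, h2⟩; linarith
    have : HasDerivAt (fun b : ℝ => 2 - A - b) (-1) B := by
      simpa using ((hasDerivAt_id B).const_sub (2 - A))
    have := (this.log hpos.ne').neg
    rw [show (1:ℝ)/(2-A-B) = -(-1/(2-A-B)) by ring]
    exact this
  have hint : IntervalIntegrable (fun B => 1 / (2 - A - B)) volume 0 (1 - A) := by
    apply ContinuousOn.intervalIntegrable
    apply ContinuousOn.div continuousOn_const (by fun_prop)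
    intro B hB
    rw [Set.uIcc_of_le (by linarith [hA.2])] at hB
    rcases hB with ⟨h1, h2⟩; intro h; linarith [hA.2]
  rw [intervalIntegral.integral_eq_sub_of_hasDerivAt h hint]
  simp
  norm_num

/-- The measure `μ` on `(0,1)³ × {0,1}` with density
`(6/π²)·𝟙{0<A<1}·𝟙{0<B<1−A}·𝟙{0<Q<1/(2−A−B)}/(1−A)` w.r.t. `dA dB dQ` times counting
measure on `N ∈ {0,1}` is a probability measure, i.e.
`2·(6/π²)·∫₀¹ (∫₀^{1−A} ∫₀^{1/(2−A−B)} dQ dB)/(1−A) dA = 1`. -/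
theorem mu_is_probability :
    2 * (6 / Real.pi ^ 2) *
      ∫ A in (0:ℝ)..1,
        (∫ B in (0:ℝ)..(1 - A), ∫ _Q in (0:ℝ)..(1 / (2 - A - B)), (1:ℝ)) / (1 - A) = 1 := by
  set g : ℝ → ℝ := fun u => Real.log (1+u)/u with hg
  have e3 : (∫ A in (0:ℝ)..1,
      (∫ B in (0:ℝ)..(1 - A), ∫ _Q in (0:ℝ)..(1 / (2 - A - B)), (1:ℝ)) / (1 - A))
      = ∫ u in (0:ℝ)..1, g u := by
    have hsub := intervalIntegral.integral_comp_sub_left (a := (0:ℝ)) (b := 1) g 1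
    rw [show (1:ℝ)-1 = 0 by norm_num, show (1:ℝ)-0 = 1 by norm_num] at hsub
    rw [← hsub]
    rw [intervalIntegral.integral_of_le zero_le_one,
      intervalIntegral.integral_of_le zero_le_one,
      MeasureTheory.integral_Ioc_eq_integral_Ioo,
      MeasureTheory.integral_Ioc_eq_integral_Ioo]
    apply MeasureTheory.setIntegral_congr_fun measurableSet_Ioo
    intro A hA
    have hQ : ∀ B : ℝ, (∫ _Q in (0:ℝ)..(1 / (2 - A - B)), (1:ℝ)) = 1/(2-A-B) := by
      intro B; simp
    simp only [hQ]
    rw [b_int A hA, hg]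
    have : 1 + (1 - A) = 2 - A := by ring
    simp only [this]
  rw [e3, dilog_int]
  have hpi : (π:ℝ) ≠ 0 := Real.pi_ne_zero
  field_simp
  ring
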